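/- For multiplicative characters A, B, B', C of F_q and x, y ∈ F_q, the finite field Appell function F₁(A;B,B';C;x,y) := ε(xy)·(AC)(-1)·∑_{u∈F_q} A(u)(ĀC)(1-u)B̄(1-ux)B̄'(1-uy) satisfies F₁(A;B,B';C;x,y) = (1/(q-1)²) ∑_{χ,λ} [Aχλ choose Cχλ][Bχ choose χ][B'λ choose λ] χ(x)λ(y), where sums are over all multiplicative characters. -/

import Mathlib

open Finset

variable {F : Type*} [Field F] [Fintype F] [DecidableEq F]

/-- Finite-field binomial coefficient `[A choose B] = B(-1) * J(A, B⁻¹)`. -/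
noncomputable def ffBinom (A B : MulChar F ℂ) : ℂ :=
  B (-1) * jacobiSum A B⁻¹

/-- Finite-field Gauss hypergeometric function
`₂F₁[A,B;C;x] = ε(x)·(BC)(-1)·∑_u B(u)(B̅C)(1-u)A̅(1-ux)`. -/
noncomputable def ffHyp (A B C : MulChar F ℂ) (x : F) : ℂ :=
  (1 : MulChar F ℂ) x * (B * C) (-1) *
    ∑ u : F, B u * (B⁻¹ * C) (1 - u) * A⁻¹ (1 - u * x)

/-- Finite-field Appell function
`F₁(A;B,B';C;x,y) = ε(xy)·(AC)(-1)·∑_u A(u)(A̅C)(1-u)B̅(1-ux)B̅'(1-uy)`. -/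
noncomputable def ffAppellF1 (A B B' C : MulChar F ℂ) (x y : F) : ℂ :=
  (1 : MulChar F ℂ) (x * y) * (A * C) (-1) *
    ∑ u : F, A u * (A⁻¹ * C) (1 - u) * B⁻¹ (1 - u * x) * B'⁻¹ (1 - u * y)

/-- δ(0)=1, δ(t)=0 otherwise. -/
noncomputable def ffDelta (x : F) : ℂ := if x = 0 then 1 else 0

section Aux

lemma mc_neg_one_sq (χ : MulChar F ℂ) : χ (-1) * χ (-1) = 1 := by
  rw [← map_mul, neg_mul_neg, one_mul, map_one]

lemma mc_map_inv (χ : MulChar F ℂ) (z : F) : χ z⁻¹ = (χ z)⁻¹ := by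
  rcases eq_or_ne z 0 with rfl | hz
  · rw [inv_zero, MulChar.map_zero, inv_zero]
  · exact eq_inv_of_mul_eq_one_left (by rw [← map_mul, inv_mul_cancel₀ hz, map_one])

lemma sum_chars [Fintype (MulChar F ℂ)] (a : F) :
    ∑ χ : MulChar F ℂ, χ a = if a = 1 then ((Fintype.card F : ℂ) - 1) else 0 := by
  split_ifs with ha
  · subst ha
    simp only [map_one]
    rw [Finset.sum_const, Finset.card_univ, nsmul_eq_mul, mul_one]
    have h1 : Nat.card (MulChar F ℂ) = Nat.card Fˣ :=
      MulChar.card_eq_card_units_of_hasEnoughRootsOfUnity F ℂ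
    rw [← Nat.card_eq_fintype_card, h1, Nat.card_eq_fintype_card, Fintype.card_units]
    have h2 : 1 ≤ Fintype.card F := Fintype.card_pos
    push_cast [h2]
    ring
  · obtain ⟨χ, hχ⟩ := MulChar.exists_apply_ne_one_of_hasEnoughRootsOfUnity F ℂ ha
    refine eq_zero_of_mul_eq_self_left hχ ?_
    simp only [Finset.mul_sum, ← MulChar.mul_apply]
    exact Fintype.sum_bijective _ (Group.mulLeft_bijective χ) _ _ fun χ' ↦ rfl

/-- The reindexing involution `s ↦ s/(s-1)` (patched at `s = 1`). -/
noncomputable def phiF (s : F) : F := if s = 1 then 1 else s * (s - 1)⁻¹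

lemma phiF_invol : Function.Involutive (phiF (F := F)) := by
  intro s
  by_cases h : s = 1
  · simp [phiF, h]
  · have h1 : s - 1 ≠ 0 := sub_ne_zero.mpr h
    have h2 : s * (s - 1)⁻¹ ≠ 1 := by
      intro hc
      field_simp at hc
      exact one_ne_zero (α := F) (by linear_combination hc)
    unfold phiF
    rw [if_neg h, if_neg h2]
    have h3 : s * (s - 1)⁻¹ - 1 = (s - 1)⁻¹ := by field_simp; ring
    rw [h3, inv_inv]
    field_simp

lemma key_h (A C : MulChar F ℂ) (u : F) :
    (A * C) (-1) * (A u * (A⁻¹ * C) (1 - u)) =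
      C (-1) * A (phiF u) * C ((1 - phiF u)⁻¹) := by
  by_cases hu1 : u = 1
  · subst hu1
    simp [phiF, MulChar.map_zero, MulChar.mul_apply]
  by_cases hu0 : u = 0
  · subst hu0
    simp [phiF, MulChar.map_zero, MulChar.mul_apply]
  · have hv : u - 1 ≠ 0 := sub_ne_zero.mpr hu1
    have h1u : (1 : F) - u ≠ 0 := by
      intro hc; exact hv (by linear_combination -hc)
    unfold phiF
    rw [if_neg hu1]
    have e1 : (1 : F) - u * (u - 1)⁻¹ = -(u - 1)⁻¹ := by field_simp; ring
    rw [e1]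
    have e2 : (-(u - 1)⁻¹)⁻¹ = -(u - 1) := by rw [inv_neg, inv_inv]
    rw [e2]
    have e3 : -(u - 1) = (-1) * (u - 1) := by ring
    rw [map_mul A u ((u - 1)⁻¹), mc_map_inv A (u - 1), e3, map_mul C]
    have e5 : u - 1 = (-1) * (1 - u) := by ring
    rw [e5, map_mul A, map_mul C, MulChar.mul_apply, MulChar.mul_apply,
      MulChar.inv_apply_eq_inv']
    have hA := mc_neg_one_sq A
    have hC := mc_neg_one_sq C
    rw [mul_inv, inv_eq_of_mul_eq_one_left hA]
    linear_combination (-(A (-1) * C (-1) * A u * (A (1 - u))⁻¹ * C (1 - u))) * hC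

lemma evalT (Bc : MulChar F ℂ) {x s : F} (hx : x ≠ 0) (hs0 : s ≠ 0) (hs1 : s ≠ 1) :
    (∑ t : F, if s * (1 - s)⁻¹ * (t * (1 - t)⁻¹) * x = 1 then Bc t else 0)
      = Bc ((1 - s * (s - 1)⁻¹ * x)⁻¹) := by
  set D := 1 - s + s * x with hD
  have hs1' : (1 : F) - s ≠ 0 := fun hc => hs1 (by linear_combination -hc)
  have hsm1 : s - 1 ≠ 0 := sub_ne_zero.mpr hs1
  have hrel : 1 - s * (s - 1)⁻¹ * x = D * (1 - s)⁻¹ := by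
    field_simp
    ring
  have key : ∀ t : F, (s * (1 - s)⁻¹ * (t * (1 - t)⁻¹) * x = 1) ↔
      (D ≠ 0 ∧ t = (1 - s) * D⁻¹) := by
    intro t
    by_cases ht1 : t = 1
    · subst ht1
      rw [sub_self, inv_zero, mul_zero, mul_zero, zero_mul]
      constructor
      · intro hc; exact absurd hc.symm one_ne_zero
      · rintro ⟨hDne, ht⟩
        exfalso
        rw [eq_comm] at ht
        field_simp at ht
        exact mul_ne_zero hs0 hx (by linear_combination -ht)
    · have h1t : (1 : F) - t ≠ 0 := fun hc => ht1 (by linear_combination -hc)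
      have hprod : ((1 - s) * (1 - t)) ≠ 0 := mul_ne_zero hs1' h1t
      have l1 : (s * (1 - s)⁻¹ * (t * (1 - t)⁻¹) * x = 1) ↔
          s * t * x = (1 - s) * (1 - t) := by
        rw [show s * (1 - s)⁻¹ * (t * (1 - t)⁻¹) * x = (s * t * x) / ((1 - s) * (1 - t)) by
          rw [div_eq_mul_inv, mul_inv]; ring, div_eq_one_iff_eq hprod]
      rw [l1]
      constructor
      · intro h
        have ht : t * D = 1 - s := by linear_combination h
        have hDne : D ≠ 0 := by
          intro h0
          rw [h0, mul_zero] at ht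
          exact hs1' ht.symm
        refine ⟨hDne, ?_⟩
        field_simp
        linear_combination ht
      · rintro ⟨hDne, rfl⟩
        field_simp
        linear_combination (-(1 - s)) * hD
  by_cases hDz : D = 0
  · rw [hrel, hDz, zero_mul, inv_zero, MulChar.map_zero]
    exact Finset.sum_eq_zero fun t _ => if_neg (fun hc => ((key t).mp hc).1 hDz)
  · have hcong : ∀ t ∈ (univ : Finset F),
        (if s * (1 - s)⁻¹ * (t * (1 - t)⁻¹) * x = 1 then Bc t else 0)
          = (if t = (1 - s) * D⁻¹ then Bc t else 0) := by
      intro t _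
      simp only [key, and_iff_right hDz]
    rw [Finset.sum_congr rfl hcong, Finset.sum_ite_eq' univ ((1 - s) * D⁻¹) (fun t => Bc t),
      if_pos (mem_univ _)]
    congr 1
    rw [hrel, mul_inv, inv_inv, mul_comm]

lemma pre_aux (c e f j1 j2 j3 u v : ℂ) (he : e * e = 1) (hf : f * f = 1) :
    c * e * f * j1 * (e * j2) * (f * j3) * u * v = c * j1 * j2 * j3 * u * v := by
  linear_combination (c * f * f * j1 * j2 * j3 * u * v) * he + (c * j1 * j2 * j3 * u * v) * hf

lemma claim1 (A B B' C χ μ : MulChar F ℂ) (x y : F) :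
    ffBinom (A * χ * μ) (C * χ * μ) * ffBinom (B * χ) χ * ffBinom (B' * μ) μ * χ x * μ y
    = ∑ p : F × F × F,
        (C (-1) * A p.1 * C ((1 - p.1)⁻¹) * B p.2.1 * B' p.2.2)
          * χ (p.1 * (1 - p.1)⁻¹ * (p.2.1 * (1 - p.2.1)⁻¹) * x)
          * μ (p.1 * (1 - p.1)⁻¹ * (p.2.2 * (1 - p.2.2)⁻¹) * y) := by
  have step1 : ffBinom (A * χ * μ) (C * χ * μ) * ffBinom (B * χ) χ * ffBinom (B' * μ) μ
        * χ x * μ y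
      = C (-1) * jacobiSum (B' * μ) μ⁻¹ * jacobiSum (B * χ) χ⁻¹
        * jacobiSum (A * χ * μ) (C * χ * μ)⁻¹ * χ x * μ y := by
    unfold ffBinom
    rw [MulChar.mul_apply, MulChar.mul_apply]
    rw [pre_aux _ _ _ _ _ _ _ _ (mc_neg_one_sq χ) (mc_neg_one_sq μ)]
    ring
  rw [step1]
  simp only [jacobiSum, Fintype.sum_prod_type]
  simp only [Finset.mul_sum, Finset.sum_mul]
  refine Finset.sum_congr rfl fun s _ => Finset.sum_congr rfl fun t _ =>
    Finset.sum_congr rfl fun w _ => ?_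
  simp only [MulChar.mul_apply, MulChar.inv_apply', map_mul]
  ring

end Aux

theorem stmt2 [Fintype (MulChar F ℂ)] (A B B' C : MulChar F ℂ) (x y : F) :
    ffAppellF1 A B B' C x y =
      (((Fintype.card F : ℂ) - 1) ^ 2)⁻¹ *
        ∑ χ : MulChar F ℂ, ∑ μ : MulChar F ℂ,
          ffBinom (A * χ * μ) (C * χ * μ) * ffBinom (B * χ) χ * ffBinom (B' * μ) μ *
            χ x * μ y := by
  have hq1 : ((Fintype.card F : ℂ) - 1) ≠ 0 := by
    intro hc
    have h2 : 1 < Fintype.card F := Fintype.one_lt_card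
    have h3 : (Fintype.card F : ℂ) = 1 := by linear_combination hc
    rw [Nat.cast_eq_one] at h3
    omega
  -- Step A : the double character sum equals (q-1)^2 times a triple delta sum
  have stepA : ∑ χ : MulChar F ℂ, ∑ μ : MulChar F ℂ,
          ffBinom (A * χ * μ) (C * χ * μ) * ffBinom (B * χ) χ * ffBinom (B' * μ) μ *
            χ x * μ y
      = ((Fintype.card F : ℂ) - 1) ^ 2 * ∑ p : F × F × F,
          (C (-1) * A p.1 * C ((1 - p.1)⁻¹) * B p.2.1 * B' p.2.2)
            * (if p.1 * (1 - p.1)⁻¹ * (p.2.1 * (1 - p.2.1)⁻¹) * x = 1 then 1 else 0)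
            * (if p.1 * (1 - p.1)⁻¹ * (p.2.2 * (1 - p.2.2)⁻¹) * y = 1 then 1 else 0) := by
    calc ∑ χ : MulChar F ℂ, ∑ μ : MulChar F ℂ,
          ffBinom (A * χ * μ) (C * χ * μ) * ffBinom (B * χ) χ * ffBinom (B' * μ) μ *
            χ x * μ y
        = ∑ χ : MulChar F ℂ, ∑ μ : MulChar F ℂ, ∑ p : F × F × F,
            (C (-1) * A p.1 * C ((1 - p.1)⁻¹) * B p.2.1 * B' p.2.2)
              * χ (p.1 * (1 - p.1)⁻¹ * (p.2.1 * (1 - p.2.1)⁻¹) * x)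
              * μ (p.1 * (1 - p.1)⁻¹ * (p.2.2 * (1 - p.2.2)⁻¹) * y) := by
          exact Finset.sum_congr rfl fun χ _ => Finset.sum_congr rfl fun μ _ =>
            claim1 A B B' C χ μ x y
      _ = ∑ χ : MulChar F ℂ, ∑ p : F × F × F, ∑ μ : MulChar F ℂ,
            (C (-1) * A p.1 * C ((1 - p.1)⁻¹) * B p.2.1 * B' p.2.2)
              * χ (p.1 * (1 - p.1)⁻¹ * (p.2.1 * (1 - p.2.1)⁻¹) * x)
              * μ (p.1 * (1 - p.1)⁻¹ * (p.2.2 * (1 - p.2.2)⁻¹) * y) := by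
          exact Finset.sum_congr rfl fun χ _ => Finset.sum_comm
      _ = ∑ p : F × F × F, ∑ χ : MulChar F ℂ, ∑ μ : MulChar F ℂ,
            (C (-1) * A p.1 * C ((1 - p.1)⁻¹) * B p.2.1 * B' p.2.2)
              * χ (p.1 * (1 - p.1)⁻¹ * (p.2.1 * (1 - p.2.1)⁻¹) * x)
              * μ (p.1 * (1 - p.1)⁻¹ * (p.2.2 * (1 - p.2.2)⁻¹) * y) := Finset.sum_comm
      _ = ∑ p : F × F × F,
            (C (-1) * A p.1 * C ((1 - p.1)⁻¹) * B p.2.1 * B' p.2.2)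
              * (∑ χ : MulChar F ℂ, χ (p.1 * (1 - p.1)⁻¹ * (p.2.1 * (1 - p.2.1)⁻¹) * x))
              * (∑ μ : MulChar F ℂ, μ (p.1 * (1 - p.1)⁻¹ * (p.2.2 * (1 - p.2.2)⁻¹) * y)) := by
          refine Finset.sum_congr rfl fun p _ => ?_
          conv_rhs => rw [mul_assoc, Finset.sum_mul_sum, Finset.mul_sum]
          refine Finset.sum_congr rfl fun χ _ => ?_
          rw [Finset.mul_sum]
          exact Finset.sum_congr rfl fun μ _ => by ring
      _ = ((Fintype.card F : ℂ) - 1) ^ 2 * ∑ p : F × F × F,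
            (C (-1) * A p.1 * C ((1 - p.1)⁻¹) * B p.2.1 * B' p.2.2)
              * (if p.1 * (1 - p.1)⁻¹ * (p.2.1 * (1 - p.2.1)⁻¹) * x = 1 then 1 else 0)
              * (if p.1 * (1 - p.1)⁻¹ * (p.2.2 * (1 - p.2.2)⁻¹) * y = 1 then 1 else 0) := by
          rw [Finset.mul_sum]
          refine Finset.sum_congr rfl fun p _ => ?_
          rw [sum_chars, sum_chars]
          split_ifs <;> ring
  rw [stepA, ← mul_assoc, inv_mul_cancel₀ (pow_ne_zero 2 hq1), one_mul]
  -- degenerate cases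
  by_cases hx : x = 0
  · rw [ffAppellF1, hx, zero_mul, MulChar.map_zero, zero_mul, zero_mul]
    symm
    refine Finset.sum_eq_zero fun p _ => ?_
    simp
  by_cases hy : y = 0
  · rw [ffAppellF1, hy, mul_zero, MulChar.map_zero, zero_mul, zero_mul]
    symm
    refine Finset.sum_eq_zero fun p _ => ?_
    simp
  -- main case
  rw [ffAppellF1, MulChar.one_apply (isUnit_iff_ne_zero.mpr (mul_ne_zero hx hy)), one_mul]
  rw [show (∑ p : F × F × F,
          (C (-1) * A p.1 * C ((1 - p.1)⁻¹) * B p.2.1 * B' p.2.2)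
            * (if p.1 * (1 - p.1)⁻¹ * (p.2.1 * (1 - p.2.1)⁻¹) * x = 1 then 1 else 0)
            * (if p.1 * (1 - p.1)⁻¹ * (p.2.2 * (1 - p.2.2)⁻¹) * y = 1 then 1 else 0))
      = ∑ s : F, (C (-1) * A s * C ((1 - s)⁻¹))
          * (∑ t : F, if s * (1 - s)⁻¹ * (t * (1 - t)⁻¹) * x = 1 then B t else 0)
          * (∑ w : F, if s * (1 - s)⁻¹ * (w * (1 - w)⁻¹) * y = 1 then B' w else 0) from ?_]
  · -- now evaluate the t/w sums and reindex
    have hsum : ∀ s : F, (C (-1) * A s * C ((1 - s)⁻¹))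
          * (∑ t : F, if s * (1 - s)⁻¹ * (t * (1 - t)⁻¹) * x = 1 then B t else 0)
          * (∑ w : F, if s * (1 - s)⁻¹ * (w * (1 - w)⁻¹) * y = 1 then B' w else 0)
        = (C (-1) * A s * C ((1 - s)⁻¹)) * B ((1 - phiF s * x)⁻¹) * B' ((1 - phiF s * y)⁻¹) := by
      intro s
      by_cases hs0 : s = 0
      · subst hs0; rw [MulChar.map_zero]; ring
      by_cases hs1 : s = 1
      · subst hs1; rw [sub_self, inv_zero, MulChar.map_zero]; ring
      · rw [evalT B hx hs0 hs1, evalT B' hy hs0 hs1]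
        unfold phiF
        rw [if_neg hs1]
    rw [Finset.sum_congr rfl fun s _ => hsum s]
    rw [Finset.mul_sum]
    rw [← Equiv.sum_comp (phiF_invol (F := F)).toPerm
      (fun s => (C (-1) * A s * C ((1 - s)⁻¹)) * B ((1 - phiF s * x)⁻¹)
        * B' ((1 - phiF s * y)⁻¹))]
    refine Finset.sum_congr rfl fun u _ => ?_
    simp only [Function.Involutive.coe_toPerm]
    rw [phiF_invol u]
    simp only [MulChar.inv_apply']
    linear_combination (B ((1 - u * x)⁻¹) * B' ((1 - u * y)⁻¹)) * (key_h A C u)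
  · -- the Fubini/factoring step
    simp only [Fintype.sum_prod_type]
    refine Finset.sum_congr rfl fun s _ => ?_
    conv_rhs => rw [mul_assoc, Finset.sum_mul_sum, Finset.mul_sum]
    refine Finset.sum_congr rfl fun t _ => ?_
    rw [Finset.mul_sum]
    refine Finset.sum_congr rfl fun w _ => ?_
    split_ifs <;> ring
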